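/- As M → 0⁺, if p_M > 1 is defined by p_M·ln p_M − (p_M − 1) = M, then (p_M − 1)/√(2M) → 1. -/

import Mathlib

open Real Filter Set

noncomputable def Fent (x : ℝ) : ℝ := x * Real.log x - (x - 1)

lemma Fent_hasDeriv {x : ℝ} (hx : 0 < x) : HasDerivAt Fent (Real.log x) x := by
  have h1 : HasDerivAt (fun y : ℝ => y * Real.log y) (Real.log x + 1) x := by
    have := (hasDerivAt_id x).mul (Real.hasDerivAt_log hx.ne')
    refine this.congr_deriv ?_
    simp [hx.ne']
  have h2 : HasDerivAt (fun y : ℝ => y - 1) 1 x := (hasDerivAt_id x).sub_const 1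
  have := h1.sub h2
  refine this.congr_deriv ?_
  ring

lemma Fent_one : Fent 1 = 0 := by simp [Fent]

lemma Fent_mono : StrictMonoOn Fent (Set.Ici 1) := by
  apply strictMonoOn_of_deriv_pos (convex_Ici 1)
  · exact fun x hx =>
      ((Fent_hasDeriv (by have := mem_Ici.mp hx; linarith)).continuousAt).continuousWithinAt
  · intro x hx
    rw [interior_Ici] at hx
    have hx1 : (1:ℝ) < x := hx
    rw [(Fent_hasDeriv (by linarith)).deriv]
    exact Real.log_pos hx1

lemma Fent_pos {x : ℝ} (hx : 1 < x) : 0 < Fent x := by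
  have := Fent_mono (mem_Ici.mpr le_rfl) (mem_Ici.mpr hx.le) hx
  rwa [Fent_one] at this

lemma p_tendsto (p : ℝ → ℝ)
    (hp : ∀ M : ℝ, 0 < M → 1 < p M ∧
      p M * Real.log (p M) - (p M - 1) = M) :
    Tendsto p (nhdsWithin 0 (Set.Ioi 0)) (nhdsWithin 1 (Set.Ioi 1)) := by
  rw [tendsto_nhdsWithin_iff]
  constructor
  · rw [tendsto_order]
    constructor
    · intro a ha
      filter_upwards [self_mem_nhdsWithin] with M hM
      exact lt_trans ha (hp M hM).1
    · intro b hb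
      have hFb : 0 < Fent b := Fent_pos hb
      filter_upwards [Ioo_mem_nhdsGT_of_mem ⟨le_refl (0:ℝ), hFb⟩] with M hM
      by_contra h
      push_neg at h
      have hmono := Fent_mono.monotoneOn (mem_Ici.mpr hb.le)
        (mem_Ici.mpr (le_trans hb.le h)) h
      have hFpM : Fent (p M) = M := (hp M hM.1).2
      have := hM.2
      linarith
  · filter_upwards [self_mem_nhdsWithin] with M hM using (hp M hM).1

lemma h_tendsto :
    Tendsto (fun x => (x - 1) / Real.sqrt (2 * Fent x)) (nhdsWithin 1 (Set.Ioi 1)) (nhds 1) := by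
  have hlog : Tendsto (fun x => Real.log x / (x - 1)) (nhdsWithin 1 (Set.Ioi 1)) (nhds 1) := by
    have h := Real.hasDerivAt_log one_ne_zero
    rw [hasDerivAt_iff_tendsto_slope] at h
    have h' : Tendsto (slope Real.log 1) (nhdsWithin 1 (Set.Ioi 1)) (nhds 1⁻¹) :=
      h.mono_left (nhdsWithin_mono 1 (fun x hx => ne_of_gt hx))
    have heq : ∀ x : ℝ, slope Real.log 1 x = Real.log x / (x - 1) := by
      intro x
      simp [slope_def_field, Real.log_one]
    simpa using h'.congr heq
  have hFG : Tendsto (fun x => Fent x / (x - 1) ^ 2) (nhdsWithin 1 (Set.Ioi 1))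
      (nhds (1 / 2)) := by
    apply HasDerivAt.lhopital_zero_nhdsGT (f' := fun x => Real.log x)
      (g' := fun x => 2 * (x - 1))
    · filter_upwards [self_mem_nhdsWithin] with x hx
      exact Fent_hasDeriv (by have : (1:ℝ) < x := hx; linarith)
    · filter_upwards [self_mem_nhdsWithin] with x _
      have : HasDerivAt (fun y : ℝ => (y - 1) ^ 2) (2 * (x - 1)) x := by
        simpa using ((hasDerivAt_id x).sub_const 1).fun_pow 2
      exact this
    · filter_upwards [self_mem_nhdsWithin] with x hx
      have h0 : (0:ℝ) < x - 1 := by have : (1:ℝ) < x := hx; linarith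
      positivity
    · have := ((Fent_hasDeriv one_pos).continuousAt).tendsto
      rw [Fent_one] at this
      exact this.mono_left nhdsWithin_le_nhds
    · have : Tendsto (fun x : ℝ => (x - 1) ^ 2) (nhds 1) (nhds 0) := by
        have : ContinuousAt (fun x : ℝ => (x - 1) ^ 2) 1 := by fun_prop
        simpa using this.tendsto
      exact this.mono_left nhdsWithin_le_nhds
    · have := hlog.div_const 2
      have heq : ∀ x : ℝ, Real.log x / (x - 1) / 2 = Real.log x / (2 * (x - 1)) := by
        intro x
        rw [div_div, mul_comm]
      simpa [heq] using this
  have h2 : Tendsto (fun x => (x - 1) ^ 2 / (2 * Fent x)) (nhdsWithin 1 (Set.Ioi 1))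
      (nhds 1) := by
    have key := (hFG.const_mul 2).inv₀ (by norm_num)
    have heq : ∀ x : ℝ, (2 * (Fent x / (x - 1) ^ 2))⁻¹ = (x - 1) ^ 2 / (2 * Fent x) := by
      intro x
      rw [mul_div_assoc', inv_div]
    have hlim : ((2:ℝ) * (1 / 2))⁻¹ = 1 := by norm_num
    rw [hlim] at key
    exact key.congr heq
  have h3 : Tendsto (fun x => Real.sqrt ((x - 1) ^ 2 / (2 * Fent x)))
      (nhdsWithin 1 (Set.Ioi 1)) (nhds 1) := by
    have := (Real.continuous_sqrt.tendsto 1).comp h2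
    simpa [Function.comp_def] using this
  refine h3.congr' ?_ |>.mono_left le_rfl
  filter_upwards [self_mem_nhdsWithin] with x hx
  have hx1 : (1:ℝ) < x := hx
  rw [Real.sqrt_div (by positivity), Real.sqrt_sq (by linarith)]

theorem pM_asymptotics_small_M (p : ℝ → ℝ)
    (hp : ∀ M : ℝ, 0 < M → 1 < p M ∧
      p M * Real.log (p M) - (p M - 1) = M) :
    Filter.Tendsto (fun M : ℝ => (p M - 1) / Real.sqrt (2 * M))
      (nhdsWithin 0 (Set.Ioi 0)) (nhds 1) := by
  have hcomp := h_tendsto.comp (p_tendsto p hp)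
  refine hcomp.congr' ?_
  filter_upwards [self_mem_nhdsWithin] with M hM
  have hFpM : Fent (p M) = M := (hp M hM).2
  simp only [Function.comp, hFpM]
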